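/- Let Z be a bounded injective normal operator on H whose (normal, closed) inverse R := Z⁻¹ is unbounded, and let U be a closed subspace with U ∩ D(R) = {0}, with orthogonal projection P onto U. Define A := R↾D(A), B := R*↾D(B) with D(A) = D(B) := Z(I − P)H. Then A and B are densely defined closed formally normal operators forming an adjoint pair, 0 is a regular point for both, and N(A*) = U, N(B*) = W*U where W is the unitary with WR* = R. -/

import Mathlib

open LinearPMap

variable {H : Type*} [NormedAddCommGroup H] [InnerProductSpace ℂ H] [CompleteSpace H]

local notation "⟪" x ", " y "⟫" => @inner ℂ _ _ x y

/-- `A` is formally normal: densely defined, `D(A) ⊆ D(A*)` and `‖Ax‖ = ‖A*x‖` on `D(A)`. -/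
def FormallyNormal {H : Type*} [NormedAddCommGroup H] [InnerProductSpace ℂ H]
    [CompleteSpace H] (A : H →ₗ.[ℂ] H) : Prop :=
  Dense (A.domain : Set H) ∧
    ∃ h : A.domain ≤ (A†).domain,
      ∀ x : A.domain, ‖A x‖ = ‖(A†) ⟨(x : H), h x.2⟩‖

/-- Let `Z` be a bounded injective normal operator whose inverse `R := Z⁻¹`
is unbounded, `𝒰` a closed subspace with `𝒰 ∩ D(R) = {0}`, `P` the orthogonal projection
onto `𝒰`, and `D(A) = D(B) := Z(I − P)H`, `A := R↾D(A)`, `B := R*↾D(B)`. Then `A`, `B`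
are densely defined closed formally normal operators forming an adjoint pair, `0` is a
regular point for both, and `N(A*) = 𝒰`, `N(B*) = W*𝒰`, where `W` is the unitary with
`WR* = R` (equivalently `Z* = Z∘W`). -/
theorem inverse_construction (Z : H →L[ℂ] H) (hZn : IsStarNormal Z)
    (hZinj : Function.Injective Z)
    (R : H →ₗ.[ℂ] H) (hR : ∀ p : H × H, p ∈ R.graph ↔ Z p.2 = p.1)
    (hRunbdd : (R.domain : Set H) ≠ Set.univ)
    (𝒰 : Submodule ℂ H) [CompleteSpace ↥𝒰] (h𝒰closed : IsClosed (𝒰 : Set H))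
    (h𝒰 : 𝒰 ⊓ R.domain = ⊥) (h𝒰ne : 𝒰 ≠ ⊥)
    (W : H ≃ₗᵢ[ℂ] H) (hW : ∀ y : H, ContinuousLinearMap.adjoint Z y = Z (W y))
    (D : Submodule ℂ H)
    (hD : D = LinearMap.range
      ((Z.comp (ContinuousLinearMap.id ℂ H -
        𝒰.subtypeL.comp 𝒰.orthogonalProjectionOnto) : H →L[ℂ] H) : H →ₗ[ℂ] H))
    (Aop Bop : H →ₗ.[ℂ] H)
    (hAop : Aop = R.domRestrict D) (hBop : Bop = (R†).domRestrict D) :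
    Dense (Aop.domain : Set H) ∧ Dense (Bop.domain : Set H) ∧
      Aop.IsClosed ∧ Bop.IsClosed ∧
      FormallyNormal Aop ∧ FormallyNormal Bop ∧
      Aop ≤ Bop† ∧ Bop ≤ Aop† ∧
      (∃ γ : ℝ, 0 < γ ∧ ∀ x : Aop.domain, γ * ‖(x : H)‖ ≤ ‖Aop x‖) ∧
      (∃ γ : ℝ, 0 < γ ∧ ∀ x : Bop.domain, γ * ‖(x : H)‖ ≤ ‖Bop x‖) ∧
      {x : H | (x, (0 : H)) ∈ (Aop†).graph} = (𝒰 : Set H) ∧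
      {x : H | (x, (0 : H)) ∈ (Bop†).graph} = ⇑W.symm '' (𝒰 : Set H) := by
  -- basic facts about R and W
  have hZR : ∀ v : R.domain, Z (R v) = v := fun v => (hR _).1 (R.mem_graph v)
  have hmemR : ∀ u : H, Z u ∈ R.domain := fun u =>
    mem_domain_iff.mpr ⟨u, (hR (Z u, u)).2 rfl⟩
  have hWcomm : ∀ x : H, W (Z x) = Z (W x) := by
    intro x
    apply ext_inner_right ℂ
    intro y
    have h1 : ⟪W (Z x), y⟫ = ⟪Z x, W.symm y⟫ := by
      conv_lhs => rw [← W.apply_symm_apply y, W.inner_map_map]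
    rw [h1, ← ContinuousLinearMap.adjoint_inner_right Z, hW, W.apply_symm_apply,
      ← hW, ContinuousLinearMap.adjoint_inner_left]
  have hkey : ∀ u a : H, ⟪(W.symm u : H), Z a⟫ = ⟪Z u, a⟫ := by
    intro u a
    have h1 : ⟪(W.symm u : H), Z a⟫ = ⟪u, W (Z a)⟫ := by
      conv_lhs => rw [← W.inner_map_map, W.apply_symm_apply]
    rw [h1, hWcomm, ← hW, ContinuousLinearMap.adjoint_inner_right]
  -- density of R.domain
  have hRdense : Dense (R.domain : Set H) := by
    rw [Submodule.dense_iff_topologicalClosure_eq_top,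
      Submodule.topologicalClosure_eq_top_iff, Submodule.eq_bot_iff]
    intro y hy
    have h0 : ContinuousLinearMap.adjoint Z y = 0 := by
      have := hy _ (hmemR (ContinuousLinearMap.adjoint Z y))
      rw [← ContinuousLinearMap.adjoint_inner_right] at this
      exact inner_self_eq_zero.mp this
    rw [hW] at h0
    have : W y = 0 := hZinj (by simpa using h0)
    simpa using congrArg W.symm this
  -- membership of range Z in the adjoint domain, and values of R†
  have hmemRs : ∀ u : H, Z u ∈ (R†).domain := fun u =>
    mem_adjoint_domain_of_exists _ ⟨W.symm u, fun v => by
      rw [show ((v : H)) = Z (R v) from (hZR v).symm, hkey]⟩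
  have hRs : ∀ (u : H) (h : Z u ∈ (R†).domain), (R†) ⟨Z u, h⟩ = W.symm u := fun u h =>
    adjoint_apply_eq hRdense _ (fun v => by
      rw [show ((v : H)) = Z (R v) from (hZR v).symm, hkey])
  -- description of D
  have hD2 : ∀ x ∈ D, ∃ a, a ∈ 𝒰ᗮ ∧ Z a = x := by
    intro x hx
    rw [hD] at hx
    obtain ⟨w, rfl⟩ := hx
    exact ⟨w - (𝒰.orthogonalProjectionOnto w : H),
      Submodule.sub_starProjection_mem_orthogonal (K := 𝒰) w, by
        simp [ContinuousLinearMap.sub_apply]⟩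
  have hD3 : ∀ a ∈ 𝒰ᗮ, Z a ∈ D := by
    intro a ha
    rw [hD]
    exact ⟨a, by
      simp [ContinuousLinearMap.sub_apply,
        Submodule.orthogonalProjectionOnto_apply_of_mem_orthogonal ha]⟩
  -- density of D
  have hDdense : Dense (D : Set H) := by
    rw [Submodule.dense_iff_topologicalClosure_eq_top,
      Submodule.topologicalClosure_eq_top_iff, Submodule.eq_bot_iff]
    intro y hy
    have hmem : ContinuousLinearMap.adjoint Z y ∈ 𝒰ᗮᗮ := by
      rw [Submodule.mem_orthogonal]
      intro a ha
      rw [ContinuousLinearMap.adjoint_inner_right]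
      exact hy _ (hD3 a ha)
    rw [Submodule.orthogonal_orthogonal] at hmem
    have h0 : ContinuousLinearMap.adjoint Z y = 0 := by
      rw [← Submodule.mem_bot (R := ℂ) (M := H), ← h𝒰]
      exact ⟨hmem, by rw [hW]; exact hmemR _⟩
    rw [hW] at h0
    have : W y = 0 := hZinj (by simpa using h0)
    simpa using congrArg W.symm this
  -- the domains of Aop and Bop
  have hDR : D ≤ R.domain := by
    intro x hx
    obtain ⟨a, _, rfl⟩ := hD2 x hx
    exact hmemR a
  have hDRs : D ≤ (R†).domain := by
    intro x hx
    obtain ⟨a, _, rfl⟩ := hD2 x hx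
    exact hmemRs a
  have hAdom : Aop.domain = D := by
    rw [hAop, domRestrict_domain, inf_eq_left]; exact hDR
  have hBdom : Bop.domain = D := by
    rw [hBop, domRestrict_domain, inf_eq_left]; exact hDRs
  have hAle : Aop ≤ R := hAop ▸ domRestrict_le
  have hBle : Bop ≤ R† := hBop ▸ domRestrict_le
  have hAmem : ∀ a ∈ 𝒰ᗮ, Z a ∈ Aop.domain := fun a ha => by
    rw [hAdom]; exact hD3 a ha
  have hBmem : ∀ a ∈ 𝒰ᗮ, Z a ∈ Bop.domain := fun a ha => by
    rw [hBdom]; exact hD3 a ha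
  -- the graphs of Aop and Bop
  have hAgraph : ∀ v : Aop.domain, ∃ a, a ∈ 𝒰ᗮ ∧ Z a = (v : H) ∧ Aop v = a := by
    intro v
    obtain ⟨a, ha, hZa⟩ := hD2 _ (show ((v : H)) ∈ D by rw [← hAdom]; exact v.2)
    obtain ⟨y, hy1, hy2⟩ := exists_of_le hAle v
    refine ⟨a, ha, hZa, hZinj ?_⟩
    rw [hy2, hZR y, ← hy1]
    exact hZa.symm
  have hBgraph : ∀ v : Bop.domain, ∃ a, a ∈ 𝒰ᗮ ∧ Z a = (v : H) ∧ Bop v = W.symm a := by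
    intro v
    obtain ⟨a, ha, hZa⟩ := hD2 _ (show ((v : H)) ∈ D by rw [← hBdom]; exact v.2)
    obtain ⟨y, hy1, hy2⟩ := exists_of_le hBle v
    refine ⟨a, ha, hZa, ?_⟩
    have hy : y = ⟨Z a, hmemRs a⟩ := Subtype.ext (hy1.symm.trans hZa.symm)
    rw [hy2, hy, hRs]
  -- density of the domains
  have hAdense : Dense (Aop.domain : Set H) := by rw [hAdom]; exact hDdense
  have hBdense : Dense (Bop.domain : Set H) := by rw [hBdom]; exact hDdense
  -- formal adjointness
  have hFA : Bop.IsFormalAdjoint Aop := by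
    intro x y
    obtain ⟨a, _, hZa, hva⟩ := hBgraph x
    obtain ⟨b, _, hZb, hvb⟩ := hAgraph y
    rw [hva, hvb, ← hZa, ← hZb, hkey]
  have hBleAs : Bop ≤ Aop† := hFA.symm.le_adjoint hAdense
  have hAleBs : Aop ≤ Bop† := hFA.le_adjoint hBdense
  -- closedness of Aop
  have hAclosed : Aop.IsClosed := by
    have hgraph : (Aop.graph : Set (H × H)) =
        {p : H × H | p.2 ∈ (𝒰ᗮ : Set H)} ∩ {p : H × H | Z p.2 = p.1} := by
      ext ⟨x, y⟩
      simp only [SetLike.mem_coe, mem_graph_iff, Set.mem_inter_iff, Set.mem_setOf_eq]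
      constructor
      · rintro ⟨v, hvx, hvy⟩
        obtain ⟨a, ha, hZa, hva⟩ := hAgraph v
        constructor
        · rw [← hvy, hva]; exact ha
        · rw [← hvy, hva, hZa, hvx]
      · rintro ⟨hy, hZy⟩
        have hxD : x ∈ Aop.domain := by rw [← hZy]; exact hAmem y hy
        refine ⟨⟨x, hxD⟩, rfl, ?_⟩
        obtain ⟨a, ha, hZa, hva⟩ := hAgraph ⟨x, hxD⟩
        rw [hva]
        exact hZinj (by rw [hZa, hZy])
    show IsClosed (Aop.graph : Set (H × H))
    rw [hgraph]
    exact ((Submodule.isClosed_orthogonal 𝒰).preimage continuous_snd).inter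
      (isClosed_eq (Z.continuous.comp continuous_snd) continuous_fst)
  -- closedness of Bop
  have hBclosed : Bop.IsClosed := by
    have hgraph : (Bop.graph : Set (H × H)) =
        ((fun p : H × H => W p.2) ⁻¹' (𝒰ᗮ : Set H)) ∩ {p : H × H | Z (W p.2) = p.1} := by
      ext ⟨x, y⟩
      simp only [SetLike.mem_coe, mem_graph_iff, Set.mem_inter_iff, Set.mem_setOf_eq,
        Set.mem_preimage]
      constructor
      · rintro ⟨v, hvx, hvy⟩
        obtain ⟨a, ha, hZa, hva⟩ := hBgraph v
        constructor
        · rw [← hvy, hva, W.apply_symm_apply]; exact ha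
        · rw [← hvy, hva, W.apply_symm_apply, hZa, hvx]
      · rintro ⟨hy, hZy⟩
        have hxD : x ∈ Bop.domain := by rw [← hZy]; exact hBmem _ hy
        refine ⟨⟨x, hxD⟩, rfl, ?_⟩
        obtain ⟨a, ha, hZa, hva⟩ := hBgraph ⟨x, hxD⟩
        rw [hva, show a = W y from hZinj (by rw [hZa, hZy]), W.symm_apply_apply]
    show IsClosed (Bop.graph : Set (H × H))
    rw [hgraph]
    exact ((Submodule.isClosed_orthogonal 𝒰).preimage
        (W.continuous.comp continuous_snd)).inter
      (isClosed_eq (Z.continuous.comp (W.continuous.comp continuous_snd)) continuous_fst)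
  -- formal normality of Aop
  have hFNA : FormallyNormal Aop := by
    have hle : Aop.domain ≤ (Aop†).domain := fun z hz =>
      hBleAs.1 (by rw [hBdom, ← hAdom]; exact hz)
    refine ⟨hAdense, hle, fun x => ?_⟩
    obtain ⟨a, ha, hZa, hva⟩ := hAgraph x
    have hxB : (x : H) ∈ Bop.domain := by rw [hBdom, ← hAdom]; exact x.2
    have h2 : (Aop†) ⟨(x : H), hle x.2⟩ = Bop ⟨(x : H), hxB⟩ :=
      (hBleAs.2 (x := ⟨(x : H), hxB⟩) (y := ⟨(x : H), hle x.2⟩) rfl).symm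
    obtain ⟨b, hb, hZb, hvb⟩ := hBgraph ⟨(x : H), hxB⟩
    rw [hva, h2, hvb]
    simp only [LinearIsometryEquiv.norm_map]
    rw [show b = a from hZinj (by rw [hZb, hZa])]
  -- formal normality of Bop
  have hFNB : FormallyNormal Bop := by
    have hle : Bop.domain ≤ (Bop†).domain := fun z hz =>
      hAleBs.1 (by rw [hAdom, ← hBdom]; exact hz)
    refine ⟨hBdense, hle, fun x => ?_⟩
    obtain ⟨a, ha, hZa, hva⟩ := hBgraph x
    have hxA : (x : H) ∈ Aop.domain := by rw [hAdom, ← hBdom]; exact x.2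
    have h2 : (Bop†) ⟨(x : H), hle x.2⟩ = Aop ⟨(x : H), hxA⟩ :=
      (hAleBs.2 (x := ⟨(x : H), hxA⟩) (y := ⟨(x : H), hle x.2⟩) rfl).symm
    obtain ⟨b, hb, hZb, hvb⟩ := hAgraph ⟨(x : H), hxA⟩
    rw [hva, h2, hvb]
    simp only [LinearIsometryEquiv.norm_map]
    rw [show b = a from hZinj (by rw [hZb, hZa])]
  -- regularity
  have hnormZ : ∀ a : H, ‖Z a‖ ≤ (‖Z‖ + 1) * ‖a‖ := fun a =>
    le_trans (Z.le_opNorm a) (by nlinarith [norm_nonneg a])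
  have hregA : ∃ γ : ℝ, 0 < γ ∧ ∀ x : Aop.domain, γ * ‖(x : H)‖ ≤ ‖Aop x‖ := by
    refine ⟨(‖Z‖ + 1)⁻¹, by positivity, fun x => ?_⟩
    obtain ⟨a, ha, hZa, hva⟩ := hAgraph x
    rw [hva, ← hZa, inv_mul_le_iff₀ (by positivity)]
    exact hnormZ a
  have hregB : ∃ γ : ℝ, 0 < γ ∧ ∀ x : Bop.domain, γ * ‖(x : H)‖ ≤ ‖Bop x‖ := by
    refine ⟨(‖Z‖ + 1)⁻¹, by positivity, fun x => ?_⟩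
    obtain ⟨a, ha, hZa, hva⟩ := hBgraph x
    rw [hva, ← hZa, inv_mul_le_iff₀ (by positivity)]
    simp only [LinearIsometryEquiv.norm_map]
    exact hnormZ a
  -- kernel of Aop†
  have hK1 : {x : H | (x, (0 : H)) ∈ (Aop†).graph} = (𝒰 : Set H) := by
    ext x
    simp only [Set.mem_setOf_eq, mem_graph_iff, SetLike.mem_coe]
    constructor
    · rintro ⟨v, hvx, hv0⟩
      rw [← Submodule.orthogonal_orthogonal 𝒰, Submodule.mem_orthogonal]
      intro a ha
      have hy : Z a ∈ Aop.domain := hAmem a ha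
      have hfa := adjoint_isFormalAdjoint hAdense v ⟨Z a, hy⟩
      rw [hv0, inner_zero_left] at hfa
      obtain ⟨b, hb, hZb, hvb⟩ := hAgraph ⟨Z a, hy⟩
      rw [hvb, show b = a from hZinj hZb, hvx] at hfa
      rw [inner_eq_zero_symm]
      exact hfa.symm
    · intro hx
      have hF : ∀ v : Aop.domain, ⟪(0 : H), ((v : H))⟫ = ⟪x, Aop v⟫ := by
        intro v
        obtain ⟨a, ha, hZa, hva⟩ := hAgraph v
        rw [hva, inner_zero_left]
        exact (Submodule.inner_right_of_mem_orthogonal hx ha).symm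
      exact ⟨⟨x, mem_adjoint_domain_of_exists _ ⟨0, hF⟩⟩, rfl, adjoint_apply_eq hAdense _ hF⟩
  -- kernel of Bop†
  have hK2 : {x : H | (x, (0 : H)) ∈ (Bop†).graph} = ⇑W.symm '' (𝒰 : Set H) := by
    ext x
    simp only [Set.mem_setOf_eq, mem_graph_iff, Set.mem_image, SetLike.mem_coe]
    constructor
    · rintro ⟨v, hvx, hv0⟩
      refine ⟨W x, ?_, by simp⟩
      rw [← Submodule.orthogonal_orthogonal 𝒰, Submodule.mem_orthogonal]
      intro a ha
      have hy : Z a ∈ Bop.domain := hBmem a ha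
      have hfa := adjoint_isFormalAdjoint hBdense v ⟨Z a, hy⟩
      rw [hv0, inner_zero_left] at hfa
      obtain ⟨b, hb, hZb, hvb⟩ := hBgraph ⟨Z a, hy⟩
      rw [hvb, show b = a from hZinj hZb, hvx] at hfa
      have h2 : ⟪(W x : H), a⟫ = 0 := by
        conv_lhs => rw [← W.apply_symm_apply a]
        rw [W.inner_map_map]
        exact hfa.symm
      rw [inner_eq_zero_symm]
      exact h2
    · rintro ⟨m, hm, rfl⟩
      have hF : ∀ v : Bop.domain, ⟪(0 : H), ((v : H))⟫ = ⟪(W.symm m : H), Bop v⟫ := by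
        intro v
        obtain ⟨a, ha, hZa, hva⟩ := hBgraph v
        rw [hva, inner_zero_left, LinearIsometryEquiv.inner_map_map W.symm]
        exact (Submodule.inner_right_of_mem_orthogonal hm ha).symm
      exact ⟨⟨_, mem_adjoint_domain_of_exists _ ⟨0, hF⟩⟩, rfl, adjoint_apply_eq hBdense _ hF⟩
  exact ⟨hAdense, hBdense, hAclosed, hBclosed, hFNA, hFNB, hAleBs, hBleAs, hregA, hregB, hK1, hK2⟩
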